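/- arXiv:0808.1787 — 2 statements merged into one kernel-verified Lean document; each statement's English description precedes it below -/
import Mathlib

section
/- For all integers m ≥ 1 and d ≥ 1 and every real number V ≥ 0, the number of points q ∈ {1,…,m}^d with ∏_{i=1}^d q_i ≤ V is at most V·H_m^{d−1}, where H_m = Σ_{i=1}^m 1/i is the m-th harmonic number. -/
/-- Count of `k : Fin m` with `k+1 ≤ W` is at most `W`. -/
lemma stmt18_aux (m : ℕ) (W : ℝ) (hW : 0 ≤ W) :
    (((Finset.univ : Finset (Fin m)).filter
        (fun k : Fin m => ((k : ℕ) + 1 : ℝ) ≤ W)).card : ℝ) ≤ W := by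
  have h : ((Finset.univ : Finset (Fin m)).filter
      (fun k : Fin m => ((k : ℕ) + 1 : ℝ) ≤ W)).card ≤ ⌊W⌋₊ := by
    calc ((Finset.univ : Finset (Fin m)).filter
          (fun k : Fin m => ((k : ℕ) + 1 : ℝ) ≤ W)).card
        ≤ (Finset.range ⌊W⌋₊).card := by
          apply Finset.card_le_card_of_injOn (fun k : Fin m => (k : ℕ))
          · intro k hk
            have hk2 : ((k : ℕ) + 1 : ℝ) ≤ W := (Finset.mem_filter.mp hk).2
            have h2 : ((k : ℕ) + 1 : ℕ) ≤ ⌊W⌋₊ := Nat.le_floor (by exact_mod_cast hk2)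
            exact Finset.mem_range.mpr (by show (k : ℕ) < ⌊W⌋₊; omega)
          · exact fun a _ b _ h => Fin.ext h
      _ = ⌊W⌋₊ := Finset.card_range _
  calc (((Finset.univ : Finset (Fin m)).filter
        (fun k : Fin m => ((k : ℕ) + 1 : ℝ) ≤ W)).card : ℝ)
      ≤ (⌊W⌋₊ : ℝ) := by exact_mod_cast h
    _ ≤ W := Nat.floor_le hW

/-- The number of points `q ∈ {1,…,m}^d` (encoded as `q : Fin d → Fin m` with coordinates
`q i + 1 ∈ {1,…,m}`) whose coordinate product is at most `V` is at most `V·H_m^(d-1)`,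
where `H_m` is the `m`-th harmonic number. -/
theorem stmt18 (m d : ℕ) (hm : 1 ≤ m) (hd : 1 ≤ d) (V : ℝ) (hV : 0 ≤ V) :
    (({q : Fin d → Fin m | (∏ i, ((q i : ℕ) + 1 : ℝ)) ≤ V}).ncard : ℝ) ≤
      V * (∑ i ∈ Finset.Icc 1 m, (1 : ℝ) / i) ^ (d - 1) := by
  classical
  obtain ⟨n, rfl⟩ : ∃ n, d = n + 1 := ⟨d - 1, by omega⟩
  simp only [Nat.add_sub_cancel]
  rw [Set.ncard_eq_toFinset_card']
  have hset : ({q : Fin (n+1) → Fin m | (∏ i, ((q i : ℕ) + 1 : ℝ)) ≤ V}).toFinset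
      = Finset.univ.filter (fun q : Fin (n+1) → Fin m =>
          (∏ i, ((q i : ℕ) + 1 : ℝ)) ≤ V) := by
    ext q; simp
  rw [hset]
  -- positivity of tail products
  have hP : ∀ t : Fin n → Fin m, (0 : ℝ) < ∏ i, ((t i : ℕ) + 1 : ℝ) := by
    intro t
    exact Finset.prod_pos (fun i _ => by positivity)
  -- fiberwise decomposition over the tail
  rw [Finset.card_eq_sum_card_fiberwise
    (f := fun q : Fin (n+1) → Fin m => Fin.tail q) (t := Finset.univ)
    (fun q _ => Finset.mem_univ _)]
  push_cast
  have hfib : ∀ t : Fin n → Fin m,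
      (((Finset.univ.filter (fun q : Fin (n+1) → Fin m =>
          (∏ i, ((q i : ℕ) + 1 : ℝ)) ≤ V)).filter
          (fun q => Fin.tail q = t)).card : ℝ)
        ≤ V / ∏ i, ((t i : ℕ) + 1 : ℝ) := by
    intro t
    set P := ∏ i, ((t i : ℕ) + 1 : ℝ) with hPdef
    have hPpos := hP t
    have hcard : ((Finset.univ.filter (fun q : Fin (n+1) → Fin m =>
          (∏ i, ((q i : ℕ) + 1 : ℝ)) ≤ V)).filter
          (fun q => Fin.tail q = t)).card
        = ((Finset.univ : Finset (Fin m)).filter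
            (fun k : Fin m => ((k : ℕ) + 1 : ℝ) ≤ V / P)).card := by
      apply Finset.card_bij (fun q _ => q 0)
      · intro q hq
        simp only [Finset.mem_filter, Finset.mem_univ, true_and] at hq ⊢
        obtain ⟨h1, h2⟩ := hq
        rw [Fin.prod_univ_succ] at h1
        have : (∏ i : Fin n, ((q i.succ : ℕ) + 1 : ℝ)) = P := by
          rw [hPdef, ← h2]; rfl
        rw [this] at h1
        rw [le_div_iff₀ hPpos]
        exact h1
      · intro a ha b hb hab
        simp only [Finset.mem_filter] at ha hb
        have := ha.2; have := hb.2
        funext i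
        refine Fin.cases ?_ ?_ i
        · exact hab
        · intro j
          have : a j.succ = Fin.tail a j := rfl
          rw [this, ha.2, ← hb.2]; rfl
      · intro k hk
        simp only [Finset.mem_filter, Finset.mem_univ, true_and] at hk
        refine ⟨Fin.cons k t, ?_, by simp⟩
        simp only [Finset.mem_filter, Finset.mem_univ, true_and]
        constructor
        · rw [Fin.prod_univ_succ]
          simp only [Fin.cons_zero, Fin.cons_succ]
          rw [← hPdef] at *
          calc ((k : ℕ) + 1 : ℝ) * P ≤ (V / P) * P := by
                exact mul_le_mul_of_nonneg_right hk hPpos.le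
            _ = V := div_mul_cancel₀ V hPpos.ne'
        · rfl
    rw [hcard]
    exact stmt18_aux m (V / P) (div_nonneg hV hPpos.le)
  calc (∑ t : Fin n → Fin m,
        (((Finset.univ.filter (fun q : Fin (n+1) → Fin m =>
          (∏ i, ((q i : ℕ) + 1 : ℝ)) ≤ V)).filter
          (fun q => Fin.tail q = t)).card : ℝ))
      ≤ ∑ t : Fin n → Fin m, V / ∏ i, ((t i : ℕ) + 1 : ℝ) :=
        Finset.sum_le_sum (fun t _ => hfib t)
    _ = V * ∑ t : Fin n → Fin m, ∏ i, (1 : ℝ) / ((t i : ℕ) + 1) := by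
        rw [Finset.mul_sum]
        refine Finset.sum_congr rfl (fun t _ => ?_)
        simp only [one_div, ← Finset.prod_inv_distrib, div_eq_mul_inv, one_mul]
    _ = V * (∑ k : Fin m, (1 : ℝ) / ((k : ℕ) + 1)) ^ n := by
        congr 1
        rw [← Fin.prod_const n (∑ k : Fin m, (1 : ℝ) / ((k : ℕ) + 1)),
          Finset.prod_univ_sum]
        simp
    _ = V * (∑ i ∈ Finset.Icc 1 m, (1 : ℝ) / i) ^ n := by
        congr 2
        rw [Fin.sum_univ_eq_sum_range (fun k => (1 : ℝ) / ((k : ℕ) + 1)) m,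
          show Finset.Icc 1 m = Finset.Ico 1 (m+1) from (Finset.Ico_add_one_right_eq_Icc 1 m).symm,
          Finset.sum_Ico_eq_sum_range]
        simp [add_comm]
end

section
/- For all integers m ≥ 2 and d ≥ 1, every 2-TC-spanner of the directed hypergrid [m]^d has at least (m−1)^d · L(d) / 2^{d+1} edges, where L(d) denotes the minimum number of edges of a 2-TC-spanner of the Boolean hypercube [2]^d. -/
/-- There is a directed walk of length at most `k` from `u` to `v` in the digraph
with edge relation `E`. -/
def distLE {V : Type*} (E : V → V → Prop) : ℕ → V → V → Prop
  | 0 => fun u v => u = v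
  | n + 1 => fun u v => u = v ∨ ∃ w, E u w ∧ distLE E n w v

/-- `H` is a `k`-transitive-closure-spanner of the digraph `E`: every edge of `H` is an
edge of the transitive closure of `E`, and whenever `E` has a directed path from `u` to `v`,
`H` has one of length at most `k`. -/
def IsTCSpanner {V : Type*} (E H : V → V → Prop) (k : ℕ) : Prop :=
  (∀ u v, H u v → u ≠ v ∧ Relation.TransGen E u v) ∧
  (∀ u v, Relation.ReflTransGen E u v → distLE H k u v)

/-- The Boolean hypercube digraph `[2]^d`: an edge from `x` to `y` iff `y` is obtained from
`x` by flipping a single coordinate from `false` to `true`. -/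
def cubeEdge (d : ℕ) (x y : Fin d → Bool) : Prop :=
  ∃ t, x t = false ∧ y = Function.update x t true

/-- The directed hypergrid `[m]^d` (vertices indexed by `Fin d → Fin m`): an edge from `x`
to `y` iff `y - x` is a standard basis vector. -/
def hypergridEdge (m d : ℕ) (x y : Fin d → Fin m) : Prop :=
  ∃ t, (y t : ℕ) = (x t : ℕ) + 1 ∧ ∀ s, s ≠ t → x s = y s

/-- `Sk E k` : the minimum number of edges of a `k`-TC-spanner of the digraph `E`. -/
noncomputable def Sk {V : Type*} (E : V → V → Prop) (k : ℕ) : ℕ :=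
  sInf {n | ∃ H : V → V → Prop, IsTCSpanner E H k ∧ ({p : V × V | H p.1 p.2}).ncard = n}

section Aux

open Relation Function Finset

variable {m d : ℕ}

lemma distLE_two {V : Type*} (E : V → V → Prop) (u v : V) :
    distLE E 2 u v ↔ u = v ∨ ∃ w, E u w ∧ (w = v ∨ ∃ w2, E w w2 ∧ w2 = v) := Iff.rfl

lemma grid_edge_le {x y : Fin d → Fin m} (h : hypergridEdge m d x y) (i : Fin d) :
    (x i : ℕ) ≤ y i := by
  obtain ⟨t, ht, hs⟩ := h
  by_cases hi : i = t
  · subst hi; omega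
  · rw [hs i hi]

lemma grid_rtg_le {x y : Fin d → Fin m}
    (h : Relation.ReflTransGen (hypergridEdge m d) x y) (i : Fin d) : (x i : ℕ) ≤ y i := by
  induction h with
  | refl => exact le_rfl
  | tail _ e ih => exact le_trans ih (grid_edge_le e i)

lemma grid_le_rtg : ∀ (k : ℕ) (x y : Fin d → Fin m),
    (∑ i, ((y i : ℕ) - (x i : ℕ))) ≤ k → (∀ i, (x i : ℕ) ≤ y i) →
    Relation.ReflTransGen (hypergridEdge m d) x y := by
  intro k
  induction k with
  | zero =>
    intro x y hk hle
    have h0 := Finset.sum_eq_zero_iff.mp (Nat.le_zero.mp hk)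
    have : x = y := funext fun i => Fin.ext (by have := h0 i (mem_univ i); have := hle i; omega)
    rw [this]
  | succ k ih =>
    intro x y hk hle
    by_cases hxy : x = y
    · rw [hxy]
    · have hne : ∃ t, x t ≠ y t := by
        by_contra h
        push_neg at h
        exact hxy (funext h)
      obtain ⟨t, ht⟩ := hne
      have htlt : (x t : ℕ) < y t := lt_of_le_of_ne (hle t) (fun h => ht (Fin.ext h))
      set x' : Fin d → Fin m := Function.update x t ⟨(x t : ℕ) + 1,
        lt_of_le_of_lt htlt (y t).isLt⟩ with hx'
      have hx't : (x' t : ℕ) = (x t : ℕ) + 1 := by simp [hx']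
      have hx's : ∀ s, s ≠ t → x' s = x s := fun s hs => Function.update_of_ne hs _ _
      have edge : hypergridEdge m d x x' := ⟨t, hx't, fun s hs => (hx's s hs).symm⟩
      have hle' : ∀ i, (x' i : ℕ) ≤ y i := by
        intro i
        by_cases hi : i = t
        · subst hi; omega
        · rw [hx's i hi]; exact hle i
      have hsum : (∑ i, ((y i : ℕ) - (x' i : ℕ))) ≤ k := by
        have e1 : ∑ i, ((y i : ℕ) - (x i : ℕ))
            = (∑ i ∈ Finset.univ.erase t, ((y i : ℕ) - (x i : ℕ))) + ((y t : ℕ) - (x t : ℕ)) :=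
          (Finset.sum_erase_add _ _ (mem_univ t)).symm
        have e2 : ∑ i, ((y i : ℕ) - (x' i : ℕ))
            = (∑ i ∈ Finset.univ.erase t, ((y i : ℕ) - (x' i : ℕ))) + ((y t : ℕ) - (x' t : ℕ)) :=
          (Finset.sum_erase_add _ _ (mem_univ t)).symm
        have e3 : ∑ i ∈ Finset.univ.erase t, ((y i : ℕ) - (x' i : ℕ))
            = ∑ i ∈ Finset.univ.erase t, ((y i : ℕ) - (x i : ℕ)) :=
          Finset.sum_congr rfl fun i hi => by rw [hx's i (Finset.ne_of_mem_erase hi)]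
        omega
      exact Relation.ReflTransGen.head edge (ih x' y hsum hle')

lemma cube_edge_le {x y : Fin d → Bool} (h : cubeEdge d x y) (i : Fin d) :
    (x i).toNat ≤ (y i).toNat := by
  obtain ⟨t, ht, rfl⟩ := h
  by_cases hi : i = t
  · subst hi; simp [ht]
  · rw [Function.update_of_ne hi]

lemma cube_rtg_le {x y : Fin d → Bool}
    (h : Relation.ReflTransGen (cubeEdge d) x y) (i : Fin d) : (x i).toNat ≤ (y i).toNat := by
  induction h with
  | refl => exact le_rfl
  | tail _ e ih => exact le_trans ih (cube_edge_le e i)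

lemma cube_le_rtg : ∀ (k : ℕ) (x y : Fin d → Bool),
    (∑ i, ((y i).toNat - (x i).toNat)) ≤ k → (∀ i, (x i).toNat ≤ (y i).toNat) →
    Relation.ReflTransGen (cubeEdge d) x y := by
  intro k
  induction k with
  | zero =>
    intro x y hk hle
    have h0 := Finset.sum_eq_zero_iff.mp (Nat.le_zero.mp hk)
    have : x = y := funext fun i => by
      have := h0 i (mem_univ i); have := hle i
      cases hx : x i <;> cases hy : y i <;> simp_all
    rw [this]
  | succ k ih =>
    intro x y hk hle
    by_cases hxy : x = y
    · rw [hxy]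
    · have hne : ∃ t, x t ≠ y t := by
        by_contra h
        push_neg at h
        exact hxy (funext h)
      obtain ⟨t, ht⟩ := hne
      have hxt : x t = false ∧ y t = true := by
        have := hle t
        cases hx : x t <;> cases hy : y t <;> simp_all
      set x' : Fin d → Bool := Function.update x t true with hx'
      have hx't : x' t = true := by simp [hx']
      have hx's : ∀ s, s ≠ t → x' s = x s := fun s hs => Function.update_of_ne hs _ _
      have edge : cubeEdge d x x' := ⟨t, hxt.1, rfl⟩
      have hle' : ∀ i, (x' i).toNat ≤ (y i).toNat := by
        intro i
        by_cases hi : i = t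
        · subst hi; rw [hx't, hxt.2]
        · rw [hx's i hi]; exact hle i
      have hsum : (∑ i, ((y i).toNat - (x' i).toNat)) ≤ k := by
        have e1 : ∑ i, ((y i).toNat - (x i).toNat)
            = (∑ i ∈ Finset.univ.erase t, ((y i).toNat - (x i).toNat))
              + ((y t).toNat - (x t).toNat) :=
          (Finset.sum_erase_add _ _ (mem_univ t)).symm
        have e2 : ∑ i, ((y i).toNat - (x' i).toNat)
            = (∑ i ∈ Finset.univ.erase t, ((y i).toNat - (x' i).toNat))
              + ((y t).toNat - (x' t).toNat) :=
          (Finset.sum_erase_add _ _ (mem_univ t)).symm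
        have e3 : ∑ i ∈ Finset.univ.erase t, ((y i).toNat - (x' i).toNat)
            = ∑ i ∈ Finset.univ.erase t, ((y i).toNat - (x i).toNat) :=
          Finset.sum_congr rfl fun i hi => by rw [hx's i (Finset.ne_of_mem_erase hi)]
        have h1 : (x t).toNat = 0 := by rw [hxt.1]; rfl
        have h2 : (y t).toNat = 1 := by rw [hxt.2]; rfl
        have h3 : (x' t).toNat = 1 := by rw [hx't]; rfl
        omega
      exact Relation.ReflTransGen.head edge (ih x' y hsum hle')

lemma cube_le_tg {x y : Fin d → Bool} (hle : ∀ i, (x i).toNat ≤ (y i).toNat) (hne : x ≠ y) :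
    Relation.TransGen (cubeEdge d) x y := by
  have hex : ∃ t, x t ≠ y t := by
    by_contra h
    push_neg at h
    exact hne (funext h)
  obtain ⟨t, ht⟩ := hex
  have hxt : x t = false ∧ y t = true := by
    have := hle t
    cases hx : x t <;> cases hy : y t <;> simp_all
  set x' : Fin d → Bool := Function.update x t true with hx'
  have edge : cubeEdge d x x' := ⟨t, hxt.1, rfl⟩
  have hle' : ∀ i, (x' i).toNat ≤ (y i).toNat := by
    intro i
    by_cases hi : i = t
    · subst hi; simp [hx', hxt.2]
    · rw [hx', Function.update_of_ne hi]; exact hle i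
  exact Relation.TransGen.head' edge (cube_le_rtg _ x' y le_rfl hle')

/-- Embedding of the Boolean cube into the grid at offset `z`. -/
def emb (z : Fin d → Fin (m - 1)) (x : Fin d → Bool) (i : Fin d) : Fin m :=
  ⟨(z i : ℕ) + (x i).toNat, by
    have h1 := (z i).isLt
    have h2 : (x i).toNat ≤ 1 := by cases x i <;> simp
    omega⟩

lemma emb_val (z : Fin d → Fin (m - 1)) (x : Fin d → Bool) (i : Fin d) :
    (emb z x i : ℕ) = (z i : ℕ) + (x i).toNat := rfl

lemma emb_inj (z : Fin d → Fin (m - 1)) {u v : Fin d → Bool} (h : emb z u = emb z v) : u = v := by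
  funext i
  have := congrFun h i
  have h2 : (z i : ℕ) + (u i).toNat = (z i : ℕ) + (v i).toNat := by
    rw [← emb_val z u i, ← emb_val z v i, this]
  cases hu : u i <;> cases hv : v i <;> simp_all

lemma mid (z : Fin d → Fin (m - 1)) (u v : Fin d → Bool) (w : Fin d → Fin m)
    (h1 : ∀ i, (emb z u i : ℕ) ≤ w i) (h2 : ∀ i, (w i : ℕ) ≤ emb z v i) :
    ∃ w', emb z w' = w := by
  refine ⟨fun i => decide ((w i : ℕ) = (z i : ℕ) + 1), funext fun i => Fin.ext ?_⟩
  have ha := h1 i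
  have hb := h2 i
  rw [emb_val] at ha hb
  have hu : (u i).toNat ≤ 1 := by cases u i <;> simp
  have hv : (v i).toNat ≤ 1 := by cases v i <;> simp
  rw [emb_val]
  by_cases h : (w i : ℕ) = (z i : ℕ) + 1
  · simp [h]
  · rw [decide_eq_false h, Bool.toNat_false]
    omega

lemma pullback (H : (Fin d → Fin m) → (Fin d → Fin m) → Prop)
    (hH : IsTCSpanner (hypergridEdge m d) H 2) (z : Fin d → Fin (m - 1)) :
    IsTCSpanner (cubeEdge d) (fun u v => H (emb z u) (emb z v)) 2 := by
  constructor
  · intro u v huv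
    obtain ⟨hne, htg⟩ := hH.1 _ _ huv
    have hle := fun i => grid_rtg_le htg.to_reflTransGen i
    have hne' : u ≠ v := fun h => hne (by rw [h])
    refine ⟨hne', cube_le_tg (fun i => ?_) hne'⟩
    have := hle i
    rw [emb_val, emb_val] at this
    omega
  · intro u v hrt
    have hcle := fun i => cube_rtg_le hrt i
    have hgle : ∀ i, (emb z u i : ℕ) ≤ emb z v i := fun i => by
      rw [emb_val, emb_val]
      have := hcle i
      omega
    have hd2 := hH.2 _ _ (grid_le_rtg _ _ _ le_rfl hgle)
    rw [distLE_two] at hd2 ⊢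
    rcases hd2 with h | ⟨w, hw, hrest⟩
    · exact Or.inl (emb_inj z h)
    · have hw1 : ∀ i, (emb z u i : ℕ) ≤ w i :=
        fun i => grid_rtg_le (hH.1 _ _ hw).2.to_reflTransGen i
      have hw2 : ∀ i, (w i : ℕ) ≤ emb z v i := by
        rcases hrest with rfl | ⟨w2, hw2a, rfl⟩
        · exact fun i => le_rfl
        · exact fun i => grid_rtg_le (hH.1 _ _ hw2a).2.to_reflTransGen i
      obtain ⟨w', rfl⟩ := mid z u v w hw1 hw2
      refine Or.inr ⟨w', hw, ?_⟩
      rcases hrest with h | ⟨w2, hw2a, rfl⟩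
      · exact Or.inl (emb_inj z h)
      · exact Or.inr ⟨v, hw2a, rfl⟩

end Aux

/-- Every 2-TC-spanner of the directed hypergrid `[m]^d` has at least
`(m-1)^d · L(d) / 2^(d+1)` edges, where `L(d)` is the minimum size of a 2-TC-spanner of the
Boolean hypercube `[2]^d`. -/
theorem stmt19 (m d : ℕ) (hm : 2 ≤ m) (hd : 1 ≤ d)
    (H : (Fin d → Fin m) → (Fin d → Fin m) → Prop)
    (hH : IsTCSpanner (hypergridEdge m d) H 2) :
    ((m : ℝ) - 1) ^ d * (Sk (cubeEdge d) 2 : ℝ) / 2 ^ (d + 1) ≤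
      (({p : (Fin d → Fin m) × (Fin d → Fin m) | H p.1 p.2}).ncard : ℝ) := by
  classical
  set L := Sk (cubeEdge d) 2 with hL
  -- per-copy lower bound
  have hLz : ∀ z : Fin d → Fin (m - 1),
      L ≤ (Finset.univ.filter fun p : (Fin d → Bool) × (Fin d → Bool) =>
        H (emb z p.1) (emb z p.2)).card := by
    intro z
    apply Nat.sInf_le
    refine ⟨fun u v => H (emb z u) (emb z v), pullback H hH z, ?_⟩
    rw [Set.ncard_eq_toFinset_card']
    congr 1
    ext p
    simp
  -- sum over copies equals count of triples
  have hsum : ∑ z : Fin d → Fin (m - 1),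
      (Finset.univ.filter fun p : (Fin d → Bool) × (Fin d → Bool) =>
        H (emb z p.1) (emb z p.2)).card
      = (Finset.univ.filter fun q : (Fin d → Fin (m - 1)) ×
          ((Fin d → Bool) × (Fin d → Bool)) => H (emb q.1 q.2.1) (emb q.1 q.2.2)).card := by
    simp only [Finset.card_filter]
    rw [Fintype.sum_prod_type]
  -- each grid edge is counted at most 2^d times
  have hinj : (Finset.univ.filter fun q : (Fin d → Fin (m - 1)) ×
          ((Fin d → Bool) × (Fin d → Bool)) => H (emb q.1 q.2.1) (emb q.1 q.2.2)).card
      ≤ ((Finset.univ.filter fun p : (Fin d → Fin m) × (Fin d → Fin m) => H p.1 p.2) ×ˢ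
          (Finset.univ : Finset (Fin d → Bool))).card := by
    apply Finset.card_le_card_of_injOn
      (fun q => ((emb q.1 q.2.1, emb q.1 q.2.2), q.2.1))
    · intro q hq
      simp only [Finset.mem_coe, Finset.mem_filter, Finset.mem_univ, true_and] at hq
      simp [hq]
    · intro q1 _ q2 _ heq
      obtain ⟨z1, u1, v1⟩ := q1
      obtain ⟨z2, u2, v2⟩ := q2
      simp only [Prod.mk.injEq] at heq
      obtain ⟨⟨h1, h2⟩, h3⟩ := heq
      subst h3
      have hz : z1 = z2 := by
        funext i
        have := congrFun h1 i
        have hv : (z1 i : ℕ) + (u1 i).toNat = (z2 i : ℕ) + (u1 i).toNat := by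
          rw [← emb_val z1 u1 i, ← emb_val z2 u1 i, this]
        exact Fin.ext (by omega)
      subst hz
      have hv : v1 = v2 := emb_inj z1 h2
      subst hv
      rfl
  have hcard2 : ((Finset.univ.filter fun p : (Fin d → Fin m) × (Fin d → Fin m) => H p.1 p.2) ×ˢ
          (Finset.univ : Finset (Fin d → Bool))).card
      = (Finset.univ.filter fun p : (Fin d → Fin m) × (Fin d → Fin m) => H p.1 p.2).card
          * 2 ^ d := by
    rw [Finset.card_product]
    congr 1
    simp [Fintype.card_fun]
  set N := (Finset.univ.filter fun p : (Fin d → Fin m) × (Fin d → Fin m) => H p.1 p.2).card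
    with hN
  have hNcard : ({p : (Fin d → Fin m) × (Fin d → Fin m) | H p.1 p.2}).ncard = N := by
    rw [Set.ncard_eq_toFinset_card']
    congr 1
    ext p
    simp
  have hZcard : Fintype.card (Fin d → Fin (m - 1)) = (m - 1) ^ d := by
    simp [Fintype.card_fun]
  have key : (m - 1) ^ d * L ≤ N * 2 ^ d := by
    calc (m - 1) ^ d * L = ∑ _z : Fin d → Fin (m - 1), L := by
          rw [Finset.sum_const, Finset.card_univ, hZcard, smul_eq_mul]
      _ ≤ ∑ z : Fin d → Fin (m - 1),
          (Finset.univ.filter fun p : (Fin d → Bool) × (Fin d → Bool) =>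
            H (emb z p.1) (emb z p.2)).card := Finset.sum_le_sum fun z _ => hLz z
      _ = _ := hsum
      _ ≤ _ := hinj
      _ = N * 2 ^ d := hcard2
  rw [hNcard]
  have hmR : ((m : ℝ) - 1) = ((m - 1 : ℕ) : ℝ) := by
    have h1 : (1 : ℕ) ≤ m := by omega
    rw [Nat.cast_sub h1, Nat.cast_one]
  rw [hmR]
  have hkey : (((m - 1) ^ d * L : ℕ) : ℝ) ≤ ((N * 2 ^ d : ℕ) : ℝ) := by exact_mod_cast key
  push_cast at hkey
  rw [div_le_iff₀ (by positivity)]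
  have h2 : (2 : ℝ) ^ (d + 1) = 2 * 2 ^ d := by ring
  have hN0 : (0 : ℝ) ≤ N := Nat.cast_nonneg N
  nlinarith [hkey, hN0, pow_pos (by norm_num : (0:ℝ) < 2) d]
end
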